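/- arXiv:1101.1007 — 4 statements merged into one kernel-verified Lean document; each statement's English description precedes it below -/
import Mathlib

section
/- Let [q; w₁, …, w_n] be a weighted voting game with quota q > 0 and 0 ≤ w_i ≤ q for all i. Suppose there is a partition of N into coalitions C₁, …, C_c such that C₁, …, C_{c−1} are winning and each winning coalition C_j (j ≤ c−1) has total weight strictly less than 2q, while C_c has total weight strictly less than q. Then every partition π of N contains at most 2(c−1) winning coalitions. In particular, such a partition is a 2-approximation to the optimal social welfare. -/
/-- The greedy partition for WVGs is a 2-approximation: if `C₀,…,C_{c-1}`
partition the players with the first `c-1` blocks winning and of weight `< 2q`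
and the last block of weight `< q`, then every partition has at most `2(c-1)`
winning coalitions. -/
theorem stmt_6 (n c : ℕ) (hc : 0 < c) (q : ℝ) (hq : 0 < q)
    (w : Fin n → ℝ) (hw : ∀ i, 0 ≤ w i ∧ w i ≤ q)
    (C : Fin c → Finset (Fin n))
    (hCdisj : ∀ i j : Fin c, i ≠ j → Disjoint (C i) (C j))
    (hCcover : Finset.univ.biUnion C = Finset.univ)
    (hwin : ∀ i : Fin c, (i : ℕ) < c - 1 →
      q ≤ ∑ k ∈ C i, w k ∧ ∑ k ∈ C i, w k < 2 * q)
    (hlast : ∀ i : Fin c, (i : ℕ) = c - 1 → ∑ k ∈ C i, w k < q) :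
    ∀ π : Finset (Finset (Fin n)),
      (∀ A ∈ π, ∀ B ∈ π, A ≠ B → Disjoint A B) →
      π.sup id = Finset.univ →
      (π.filter (fun B => q ≤ ∑ k ∈ B, w k)).card ≤ 2 * (c - 1) := by
  obtain ⟨m, rfl⟩ : ∃ m, c = m + 1 := ⟨c - 1, (Nat.succ_pred_eq_of_pos hc).symm⟩
  intro π hdisj hsup
  simp only [Nat.add_sub_cancel] at hwin hlast ⊢
  set S := π.filter (fun B => q ≤ ∑ k ∈ B, w k) with hS
  have hWtot : ∑ k : Fin n, w k = ∑ i : Fin (m+1), ∑ k ∈ C i, w k := by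
    rw [← hCcover, Finset.sum_biUnion]
    intro i _ j _ hij
    exact hCdisj i j hij
  have hWlt : ∑ i : Fin (m+1), ∑ k ∈ C i, w k < (2*m+1) * q := by
    rw [Fin.sum_univ_castSucc]
    have h1 : ∑ i : Fin m, ∑ k ∈ C i.castSucc, w k ≤ m * (2*q) := by
      calc ∑ i : Fin m, ∑ k ∈ C i.castSucc, w k
          ≤ ∑ _i : Fin m, 2*q :=
            Finset.sum_le_sum fun i _ =>
              le_of_lt ((hwin i.castSucc (by simp)).2)
        _ = m * (2*q) := by simp [mul_comm]
    have h2 : ∑ k ∈ C (Fin.last m), w k < q := hlast (Fin.last m) rfl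
    nlinarith
  have hkq : (S.card : ℝ) * q ≤ ∑ B ∈ S, ∑ k ∈ B, w k := by
    calc (S.card : ℝ) * q = ∑ _B ∈ S, q := by rw [Finset.sum_const, nsmul_eq_mul]
      _ ≤ ∑ B ∈ S, ∑ k ∈ B, w k :=
        Finset.sum_le_sum fun B hB => (Finset.mem_filter.mp hB).2
  have hsum_union : ∑ B ∈ S, ∑ k ∈ B, w k = ∑ k ∈ S.biUnion id, w k := by
    have hpd : Set.PairwiseDisjoint (↑S : Set (Finset (Fin n))) id :=
      fun A hA B hB hAB =>
        hdisj A (Finset.mem_filter.mp hA).1 B (Finset.mem_filter.mp hB).1 hAB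
    rw [Finset.sum_biUnion hpd]; rfl
  have hle : ∑ k ∈ S.biUnion id, w k ≤ ∑ k : Fin n, w k :=
    Finset.sum_le_sum_of_subset_of_nonneg (Finset.subset_univ _)
      (fun i _ _ => (hw i).1)
  have hfin : (S.card : ℝ) * q < (2*m+1) * q := by
    calc (S.card : ℝ) * q ≤ _ := hkq
      _ = _ := hsum_union
      _ ≤ _ := hle
      _ = _ := hWtot
      _ < _ := hWlt
  have h' : (S.card : ℝ) < 2*m+1 := lt_of_mul_lt_mul_right (by linarith) (le_of_lt hq)
  have h'' : S.card < 2*m+1 := by exact_mod_cast h'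
  omega
end

section
/- Define f on tuples (a₁, …, a_k) of natural numbers with a_r ≤ |T_r| by: f(0,…,0) = 0 and f(a) = max over nonzero tuples b with b_r ≤ a_r of f(a − b) + V(b), where V(b) is the common value of any coalition of type b. Then f(|T₁|, …, |T_k|) equals the maximum social welfare ∑_{C ∈ π} v(C) over all partitions π of N, for any coalitional game (N,v) with valid type-partition {T₁, …, T_k} and v(∅)=0. -/
/-- Correctness of the dynamic program: the recursively defined `f`, evaluated
at the full type vector `(|T₁|,…,|T_k|)`, equals the maximum social welfare
over all coalition structures. -/
theorem stmt_12 {α : Type*} [Fintype α] [DecidableEq α]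
    (v : Finset α → ℝ) (h0 : v ∅ = 0)
    (k : ℕ) (T : Fin k → Finset α)
    (hTdisj : ∀ r s : Fin k, r ≠ s → Disjoint (T r) (T s))
    (hTcover : Finset.univ.biUnion T = Finset.univ)
    (htype : ∀ r : Fin k, ∀ i ∈ T r, ∀ j ∈ T r, ∀ C : Finset α,
      i ∉ C → j ∉ C → v (insert i C) = v (insert j C))
    (Vt : (Fin k → ℕ) → ℝ)
    (hVt : ∀ C : Finset α, Vt (fun r => (C ∩ T r).card) = v C)
    (f : (Fin k → ℕ) → ℝ)
    (hf0 : f 0 = 0)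
    (hfrec : ∀ a : Fin k → ℕ, (∀ r, a r ≤ (T r).card) → a ≠ 0 →
      IsGreatest {x : ℝ | ∃ b : Fin k → ℕ, b ≠ 0 ∧ (∀ r, b r ≤ a r) ∧
        x = f (a - b) + Vt b} (f a)) :
    IsGreatest {s : ℝ | ∃ π : Finset (Finset α),
      (∀ C ∈ π, ∀ D ∈ π, C ≠ D → Disjoint C D) ∧
      π.sup id = Finset.univ ∧ (∅ : Finset α) ∉ π ∧
      s = ∑ C ∈ π, v C} (f (fun r => (T r).card)) := by
  -- every element lies in some class
  have hmem : ∀ x : α, ∃ r : Fin k, x ∈ T r := by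
    intro x
    have : x ∈ Finset.univ.biUnion T := by rw [hTcover]; exact Finset.mem_univ x
    simpa using this
  -- main lemma, by strong induction on the cardinality of S
  have H : ∀ n : ℕ, ∀ S : Finset α, S.card = n →
      IsGreatest {s : ℝ | ∃ π : Finset (Finset α),
        (∀ C ∈ π, ∀ D ∈ π, C ≠ D → Disjoint C D) ∧
        π.sup id = S ∧ (∅ : Finset α) ∉ π ∧
        s = ∑ C ∈ π, v C} (f (fun r => (S ∩ T r).card)) := by
    intro n
    induction n using Nat.strong_induction_on with
    | _ n IH =>
      intro S hS
      by_cases hSe : S = ∅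
      · subst hSe
        have ha : (fun r => ((∅ : Finset α) ∩ T r).card) = 0 := by
          funext r; simp
        rw [ha, hf0]
        constructor
        · refine ⟨∅, by simp, by simp, by simp, by simp⟩
        · rintro s ⟨π, hdisj, hsup, hne, rfl⟩
          have hπ : π = ∅ := by
            by_contra hπ
            obtain ⟨C, hC⟩ := Finset.nonempty_iff_ne_empty.2 hπ
            have hCsub : C ⊆ (∅ : Finset α) := by
              have := Finset.le_sup (f := id) hC
              rwa [hsup] at this
            exact hne (by rwa [Finset.subset_empty.mp hCsub] at hC)
          simp [hπ]
      · -- S nonempty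
        have hSne : S.Nonempty := Finset.nonempty_iff_ne_empty.2 hSe
        set a : Fin k → ℕ := fun r => (S ∩ T r).card with ha_def
        have haT : ∀ r, a r ≤ (T r).card :=
          fun r => Finset.card_le_card Finset.inter_subset_right
        have ha0 : a ≠ 0 := by
          obtain ⟨x, hx⟩ := hSne
          obtain ⟨r, hr⟩ := hmem x
          intro h
          have : (S ∩ T r).card = 0 := congrFun h r
          rw [Finset.card_eq_zero] at this
          exact absurd this (Finset.nonempty_iff_ne_empty.1 ⟨x, Finset.mem_inter.2 ⟨hx, hr⟩⟩)
        have hga := hfrec a haT ha0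
        -- type vector of a difference
        have htypeDiff : ∀ C : Finset α, C ⊆ S →
            (fun r => ((S \ C) ∩ T r).card) = a - (fun r => (C ∩ T r).card) := by
          intro C hCS
          funext r
          have hset : (S \ C) ∩ T r = (S ∩ T r) \ (C ∩ T r) := by
            ext x
            simp only [Finset.mem_inter, Finset.mem_sdiff]
            tauto
          have hsub : C ∩ T r ⊆ S ∩ T r :=
            Finset.inter_subset_inter hCS (le_refl _)
          rw [hset, Finset.card_sdiff_of_subset hsub]
          rfl
        constructor
        · -- membership: some partition of S achieves f a
          obtain ⟨b, hb0, hba, hfab⟩ := hga.1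
          -- choose c r ⊆ S ∩ T r of size b r
          have hc : ∀ r, ∃ c : Finset α, c ⊆ S ∩ T r ∧ c.card = b r := by
            intro r
            obtain ⟨c, hc1, hc2⟩ := Finset.exists_subset_card_eq (hba r)
            exact ⟨c, hc1, hc2⟩
          choose c hcsub hccard using hc
          set C : Finset α := Finset.univ.biUnion c with hC_def
          have hCT : ∀ r, C ∩ T r = c r := by
            intro r
            ext x
            simp only [hC_def, Finset.mem_inter, Finset.mem_biUnion, Finset.mem_univ,
              true_and]
            constructor
            · rintro ⟨⟨s, hs⟩, hxr⟩
              rcases eq_or_ne s r with rfl | hsr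
              · exact hs
              · have hxs : x ∈ T s := (Finset.mem_inter.1 (hcsub s hs)).2
                exact absurd hxr (Finset.disjoint_left.1 (hTdisj s r hsr) hxs)
            · intro hx
              exact ⟨⟨r, hx⟩, (Finset.mem_inter.1 (hcsub r hx)).2⟩
          have hCS : C ⊆ S := by
            intro x hx
            obtain ⟨s, _, hs⟩ := Finset.mem_biUnion.1 hx
            exact (Finset.mem_inter.1 (hcsub s hs)).1
          have hCb : (fun r => (C ∩ T r).card) = b := by
            funext r; rw [hCT r, hccard r]
          have hCne : C.Nonempty := by
            obtain ⟨r, hr⟩ := Function.ne_iff.1 hb0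
            have : (c r).Nonempty := by
              rw [← Finset.card_pos, hccard r]
              exact Nat.pos_of_ne_zero hr
            obtain ⟨x, hx⟩ := this
            exact ⟨x, Finset.mem_biUnion.2 ⟨r, Finset.mem_univ r, hx⟩⟩
          have hcard : (S \ C).card < n := by
            rw [← hS]
            exact Finset.card_lt_card (Finset.sdiff_ssubset hCS hCne)
          have hIH := IH _ hcard (S \ C) rfl
          rw [htypeDiff C hCS, hCb] at hIH
          obtain ⟨π', hdisj', hsup', hne', hsum'⟩ := hIH.1
          have hCπ' : C ∉ π' := by
            intro h
            have : C ⊆ S \ C := by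
              have := Finset.le_sup (f := id) h
              rwa [hsup'] at this
            obtain ⟨x, hx⟩ := hCne
            exact (Finset.mem_sdiff.1 (this hx)).2 hx
          refine ⟨insert C π', ?_, ?_, ?_, ?_⟩
          · intro X hX D hD hXD
            have hblock : ∀ D ∈ π', Disjoint C D := by
              intro D hD
              have hDsub : D ⊆ S \ C := by
                have := Finset.le_sup (f := id) hD
                rwa [hsup'] at this
              rw [Finset.disjoint_left]
              intro x hx hxD
              exact (Finset.mem_sdiff.1 (hDsub hxD)).2 hx
            rcases Finset.mem_insert.1 hX with rfl | hX <;>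
              rcases Finset.mem_insert.1 hD with rfl | hD
            · exact absurd rfl hXD
            · exact hblock D hD
            · exact (hblock X hX).symm
            · exact hdisj' X hX D hD hXD
          · rw [Finset.sup_insert, hsup']
            simpa [id] using Finset.union_sdiff_of_subset hCS
          · intro h
            rcases Finset.mem_insert.1 h with h | h
            · exact Finset.nonempty_iff_ne_empty.1 hCne h.symm
            · exact hne' h
          · rw [Finset.sum_insert hCπ', hfab, ← hsum', ← hVt C, hCb, add_comm]
        · -- upper bound
          rintro s ⟨π, hdisj, hsup, hne, rfl⟩
          have hπne : π.Nonempty := by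
            rw [Finset.nonempty_iff_ne_empty]
            rintro rfl
            simp only [Finset.sup_empty] at hsup
            exact hSe (hsup.symm.trans rfl) |>.elim
          obtain ⟨C, hCπ⟩ := hπne
          have hCS : C ⊆ S := by
            have := Finset.le_sup (f := id) hCπ
            rwa [hsup] at this
          have hCne : C.Nonempty := by
            rw [Finset.nonempty_iff_ne_empty]
            rintro rfl
            exact hne hCπ
          set b : Fin k → ℕ := fun r => (C ∩ T r).card with hb_def
          have hb0 : b ≠ 0 := by
            obtain ⟨x, hx⟩ := hCne
            obtain ⟨r, hr⟩ := hmem x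
            intro h
            have : (C ∩ T r).card = 0 := congrFun h r
            rw [Finset.card_eq_zero] at this
            exact absurd this (Finset.nonempty_iff_ne_empty.1
              ⟨x, Finset.mem_inter.2 ⟨hx, hr⟩⟩)
          have hba : ∀ r, b r ≤ a r :=
            fun r => Finset.card_le_card
              (Finset.inter_subset_inter hCS (le_refl _))
          have hsup' : (π.erase C).sup id = S \ C := by
            apply Finset.Subset.antisymm
            · intro x hx
              obtain ⟨D, hD, hxD⟩ := Finset.mem_sup.1 hx
              have hDπ : D ∈ π := Finset.mem_of_mem_erase hD
              have hDC : D ≠ C := Finset.ne_of_mem_erase hD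
              refine Finset.mem_sdiff.2 ⟨?_, ?_⟩
              · have := Finset.le_sup (f := id) hDπ
                rw [hsup] at this
                exact this hxD
              · exact fun hxC =>
                  Finset.disjoint_left.1 (hdisj D hDπ C hCπ hDC) hxD hxC
            · intro x hx
              obtain ⟨hxS, hxC⟩ := Finset.mem_sdiff.1 hx
              have : x ∈ π.sup id := by rw [hsup]; exact hxS
              obtain ⟨D, hD, hxD⟩ := Finset.mem_sup.1 this
              have hDC : D ≠ C := fun h => hxC (h ▸ hxD)
              exact Finset.mem_sup.2 ⟨D, Finset.mem_erase.2 ⟨hDC, hD⟩, hxD⟩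
          have hcard : (S \ C).card < n := by
            rw [← hS]
            exact Finset.card_lt_card (Finset.sdiff_ssubset hCS hCne)
          have hIH := IH _ hcard (S \ C) rfl
          rw [htypeDiff C hCS] at hIH
          have hsum' : ∑ D ∈ π.erase C, v D ≤ f (a - b) :=
            hIH.2 ⟨π.erase C,
              fun X hX D hD hXD =>
                hdisj X (Finset.mem_of_mem_erase hX) D (Finset.mem_of_mem_erase hD) hXD,
              hsup', fun h => hne (Finset.mem_of_mem_erase h), rfl⟩
          calc ∑ D ∈ π, v D = v C + ∑ D ∈ π.erase C, v D :=
                (Finset.add_sum_erase π v hCπ).symm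
            _ ≤ v C + f (a - b) := by linarith
            _ = f (a - b) + Vt b := by rw [← hVt C, add_comm]
            _ ≤ f a := hga.2 ⟨b, hb0, hba, rfl⟩
  have hfin := H Finset.univ.card Finset.univ rfl
  have hfun : (fun r => ((Finset.univ : Finset α) ∩ T r).card)
      = fun r => (T r).card := by
    funext r; rw [Finset.univ_inter]
  rwa [hfun] at hfin
end

section
/- Let A = {a₁, …, a_n} be positive integers with total sum W divisible by k, and let [q; a₁, …, a_n] be the weighted voting game with quota q = W/k. Then A can be partitioned into k disjoint subsets each of sum W/k if and only if there exists a partition π of the players into coalitions with exactly k winning coalitions (i.e., social welfare k). -/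
/-- Reduction from k-Partition: positive integers `a₁,…,a_n` of total sum `W`
(divisible by `k`) can be split into `k` parts of equal sum iff the weighted
voting game `[W/k; a₁,…,a_n]` has a coalition structure with social welfare
exactly `k`. -/
theorem stmt_13 (n k : ℕ) (hn : 0 < n) (hk : 0 < k)
    (a : Fin n → ℤ) (ha : ∀ i, 0 < a i)
    (W : ℤ) (hW : W = ∑ i, a i) (hdvd : (k : ℤ) ∣ W) :
    (∃ P : Fin k → Finset (Fin n),
      (∀ i j : Fin k, i ≠ j → Disjoint (P i) (P j)) ∧
      Finset.univ.biUnion P = Finset.univ ∧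
      ∀ j : Fin k, ∑ i ∈ P j, a i = W / k) ↔
    (∃ π : Finset (Finset (Fin n)),
      (∀ C ∈ π, ∀ D ∈ π, C ≠ D → Disjoint C D) ∧
      π.sup id = Finset.univ ∧
      (π.filter (fun C => W / (k : ℤ) ≤ ∑ i ∈ C, a i)).card = k) := by
  haveI : Nonempty (Fin n) := Fin.pos_iff_nonempty.mp hn
  obtain ⟨q, hq⟩ := hdvd
  have hkz : (0:ℤ) < (k:ℤ) := by exact_mod_cast hk
  have hWq : W / (k:ℤ) = q := by rw [hq, Int.mul_ediv_cancel_left _ hkz.ne']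
  have hWpos : 0 < W := hW ▸ Finset.sum_pos (fun i _ => ha i) Finset.univ_nonempty
  have hqpos : 0 < q := by nlinarith
  constructor
  · rintro ⟨P, hdis, hcov, hsum⟩
    have hPne : ∀ j, (P j).Nonempty := by
      intro j
      rw [Finset.nonempty_iff_ne_empty]
      intro h
      have := hsum j
      rw [h, Finset.sum_empty, hWq] at this
      omega
    have hPinj : Function.Injective P := by
      intro i j hij
      by_contra hne
      have hd := hdis i j hne
      rw [hij] at hd
      exact (hPne j).ne_empty (by simpa using disjoint_self.mp hd)
    refine ⟨Finset.univ.image P, ?_, ?_, ?_⟩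
    · rintro C hC D hD hne
      simp only [Finset.mem_image] at hC hD
      obtain ⟨i, _, rfl⟩ := hC; obtain ⟨j, _, rfl⟩ := hD
      exact hdis i j (fun h => hne (by rw [h]))
    · rw [Finset.sup_image, Function.id_comp, Finset.sup_eq_biUnion, hcov]
    · have heq : (Finset.univ.image P).filter (fun C => W / (k:ℤ) ≤ ∑ i ∈ C, a i)
          = Finset.univ.image P := by
        apply Finset.filter_true_of_mem
        rintro C hC
        simp only [Finset.mem_image] at hC
        obtain ⟨j, _, rfl⟩ := hC
        rw [hsum j]
      rw [heq, Finset.card_image_of_injective _ hPinj, Finset.card_univ, Fintype.card_fin]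
  · rintro ⟨π, hdis, hcov, hcard⟩
    set F := π.filter (fun C => W / (k:ℤ) ≤ ∑ i ∈ C, a i) with hF
    have hFsub : F ⊆ π := Finset.filter_subset _ _
    have hFmem : ∀ C ∈ F, q ≤ ∑ i ∈ C, a i := by
      intro C hC
      have := (Finset.mem_filter.mp hC).2
      rwa [hWq] at this
    have hsum_pi : ∑ C ∈ π, ∑ i ∈ C, a i = W := by
      rw [hW, ← hcov, Finset.sup_eq_biUnion]
      exact (Finset.sum_biUnion (t := id)
        (fun C hC D hD hne => hdis C hC D hD hne)).symm
    have hnonneg : ∀ C ∈ π, 0 ≤ ∑ i ∈ C, a i :=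
      fun C _ => Finset.sum_nonneg (fun i _ => (ha i).le)
    have hFge : (k:ℤ) * q ≤ ∑ C ∈ F, ∑ i ∈ C, a i := by
      have h1 : ∑ C ∈ F, q ≤ ∑ C ∈ F, ∑ i ∈ C, a i :=
        Finset.sum_le_sum hFmem
      rw [Finset.sum_const, hcard, nsmul_eq_mul] at h1
      exact h1
    have hFle : ∑ C ∈ F, ∑ i ∈ C, a i ≤ W := by
      rw [← hsum_pi]
      exact Finset.sum_le_sum_of_subset_of_nonneg hFsub
        (fun C hC _ => hnonneg C hC)
    have hFeq : ∑ C ∈ F, ∑ i ∈ C, a i = (k:ℤ) * q := by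
      linarith [hq]
    have hFq : ∀ C ∈ F, ∑ i ∈ C, a i = q := by
      intro C hC
      by_contra hne
      have h2 : q < ∑ i ∈ C, a i := lt_of_le_of_ne (hFmem C hC) (Ne.symm hne)
      have hlt : ∑ D ∈ F, q < ∑ D ∈ F, ∑ i ∈ D, a i :=
        Finset.sum_lt_sum hFmem ⟨C, hC, h2⟩
      rw [Finset.sum_const, hcard, nsmul_eq_mul, hFeq] at hlt
      exact lt_irrefl _ hlt
    have hsd : ∑ C ∈ π \ F, ∑ i ∈ C, a i = 0 := by
      have h := Finset.sum_sdiff (f := fun C => ∑ i ∈ C, a i) hFsub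
      linarith [hq]
    have hsd0 : ∀ C ∈ π \ F, ∑ i ∈ C, a i = 0 :=
      (Finset.sum_eq_zero_iff_of_nonneg
        (fun C hC => hnonneg C (Finset.mem_sdiff.mp hC).1)).mp hsd
    -- every player is in some coalition of F
    have hcovF : ∀ i : Fin n, ∃ C ∈ F, i ∈ C := by
      intro i
      have hi : i ∈ π.sup id := by rw [hcov]; exact Finset.mem_univ i
      rw [Finset.mem_sup] at hi
      obtain ⟨C, hC, hiC⟩ := hi
      refine ⟨C, ?_, hiC⟩
      by_contra hCF
      have hC0 : ∑ j ∈ C, a j = 0 :=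
        hsd0 C (Finset.mem_sdiff.mpr ⟨hC, hCF⟩)
      have : a i ≤ ∑ j ∈ C, a j :=
        Finset.single_le_sum (fun j _ => (ha j).le) hiC
      have := ha i
      omega
    have hFk : F.card = k := hcard
    let P : Fin k → Finset (Fin n) :=
      fun j => (F.equivFin.symm (Fin.cast hFk.symm j) : Finset (Fin n))
    have hPmem : ∀ j, P j ∈ F := fun j => (F.equivFin.symm (Fin.cast hFk.symm j)).2
    have hPinj : Function.Injective P := by
      intro i j hij
      have : F.equivFin.symm (Fin.cast hFk.symm i) = F.equivFin.symm (Fin.cast hFk.symm j) :=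
        Subtype.ext hij
      have := F.equivFin.symm.injective this
      have : (Fin.cast hFk.symm i : ℕ) = (Fin.cast hFk.symm j : ℕ) := by rw [this]
      exact Fin.ext this
    have hPsurj : ∀ C ∈ F, ∃ j : Fin k, P j = C := by
      intro C hC
      refine ⟨Fin.cast hFk (F.equivFin ⟨C, hC⟩), ?_⟩
      show ((F.equivFin.symm (Fin.cast hFk.symm (Fin.cast hFk (F.equivFin ⟨C, hC⟩)))) :
        Finset (Fin n)) = C
      have : Fin.cast hFk.symm (Fin.cast hFk (F.equivFin ⟨C, hC⟩)) = F.equivFin ⟨C, hC⟩ := by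
        apply Fin.ext; simp
      rw [this, Equiv.symm_apply_apply]
    refine ⟨P, ?_, ?_, ?_⟩
    · intro i j hij
      exact hdis (P i) (hFsub (hPmem i)) (P j) (hFsub (hPmem j))
        (fun h => hij (hPinj h))
    · apply Finset.eq_univ_of_forall
      intro i
      rw [Finset.mem_biUnion]
      obtain ⟨C, hC, hiC⟩ := hcovF i
      obtain ⟨j, rfl⟩ := hPsurj C hC
      exact ⟨j, Finset.mem_univ j, hiC⟩
    · intro j
      rw [hWq]
      exact hFq (P j) (hPmem j)
end

section
/- Let G = (V ∪ {s,t}, E) be a directed graph, and define the edge path coalitional game (N,v) with N = E and v(C) = 1 iff C contains the edge set of some s–t path (v(C) = 0 otherwise). Then the maximum social welfare over all partitions of E equals the maximum number of pairwise edge-disjoint s–t paths in G. -/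
open scoped Classical

lemma haspath_nonempty {V : Type*} [DecidableEq V] {s t : V} (hst : s ≠ t)
    {C : Finset (V × V)}
    (h : ∃ l : List V, l.Chain' (fun a b => (a, b) ∈ C) ∧ l.head? = some s ∧
      l.getLast? = some t) : C.Nonempty := by
  obtain ⟨l, hchain, hhead, hlast⟩ := h
  match l with
  | [] => simp at hhead
  | [a] =>
      simp at hhead hlast
      exact absurd (hhead.symm.trans hlast) hst
  | a :: b :: l' =>
      exact ⟨(a, b), (List.isChain_cons_cons.mp hchain).1⟩

/-- For edge path coalitional games, the maximum social welfare over coalition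
structures equals the maximum number of pairwise edge-disjoint s–t paths:
for every `m`, some partition of `E` has at least `m` winning blocks iff there
exist `m` pairwise edge-disjoint s–t paths. -/
theorem stmt_17 {V : Type*} [Fintype V] [DecidableEq V]
    (E : Finset (V × V)) (s t : V) (hst : s ≠ t)
    (HasPath : Finset (V × V) → Prop)
    (hHP : ∀ C : Finset (V × V), HasPath C ↔ ∃ l : List V,
      l.Chain' (fun a b => (a, b) ∈ C) ∧ l.head? = some s ∧ l.getLast? = some t) :
    ∀ m : ℕ,
      (∃ π : Finset (Finset (V × V)),
        (∀ C ∈ π, ∀ D ∈ π, C ≠ D → Disjoint C D) ∧ π.sup id = E ∧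
        m ≤ (π.filter (fun C => HasPath C)).card) ↔
      (∃ P : Fin m → Finset (V × V),
        (∀ i, P i ⊆ E ∧ HasPath (P i)) ∧
        ∀ i j : Fin m, i ≠ j → Disjoint (P i) (P j)) := by
  intro m
  constructor
  · rintro ⟨π, hdisj, hsup, hcard⟩
    set S := π.filter (fun C => HasPath C) with hS
    have hlen : m ≤ S.toList.length := by
      simpa [Finset.length_toList] using hcard
    have hget : ∀ i : Fin m, S.toList.get ⟨i, lt_of_lt_of_le i.2 hlen⟩ ∈ S := by
      intro i
      rw [← Finset.mem_toList]
      exact List.get_mem _ _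
    refine ⟨fun i => S.toList.get ⟨i, lt_of_lt_of_le i.2 hlen⟩, ?_, ?_⟩
    · intro i
      have hmem := Finset.mem_filter.mp (hget i)
      constructor
      · rw [← hsup]
        exact Finset.le_sup (f := id) hmem.1
      · exact hmem.2
    · intro i j hij
      have hne : S.toList.get ⟨i, lt_of_lt_of_le i.2 hlen⟩ ≠
          S.toList.get ⟨j, lt_of_lt_of_le j.2 hlen⟩ := by
        intro h
        have h2 := (S.nodup_toList.get_inj_iff).mp h
        exact hij (Fin.ext (by simpa using congrArg Fin.val h2))
      have hi := Finset.mem_filter.mp (hget i)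
      have hj := Finset.mem_filter.mp (hget j)
      exact hdisj _ hi.1 _ hj.1 hne
  · rintro ⟨P, hP, hPdisj⟩
    have hne : ∀ i, (P i).Nonempty := fun i =>
      haspath_nonempty hst ((hHP (P i)).mp (hP i).2)
    have hinj : Function.Injective P := by
      intro i j h
      by_contra hij
      obtain ⟨e, he⟩ := hne i
      exact Finset.disjoint_left.mp (hPdisj i j hij) he (h ▸ he)
    set U : Finset (V × V) := Finset.univ.sup P with hU
    have hUE : U ⊆ E := Finset.sup_le fun i _ => (hP i).1
    set R : Finset (V × V) := E \ U with hR
    refine ⟨Finset.univ.image P ∪ {R}, ?_, ?_, ?_⟩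
    · intro C hC D hD hCD
      have hdis : ∀ i, Disjoint R (P i) := by
        intro i
        exact Finset.disjoint_left.mpr fun e heR heP =>
          (Finset.mem_sdiff.mp heR).2 (Finset.mem_sup.mpr ⟨i, Finset.mem_univ i, heP⟩)
      simp only [Finset.mem_union, Finset.mem_image, Finset.mem_singleton] at hC hD
      rcases hC with ⟨i, _, rfl⟩ | rfl
      · rcases hD with ⟨j, _, rfl⟩ | rfl
        · exact hPdisj i j (fun h => hCD (by rw [h]))
        · exact (hdis i).symm
      · rcases hD with ⟨j, _, rfl⟩ | rfl
        · exact hdis j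
        · exact absurd rfl hCD
    · rw [Finset.sup_union, Finset.sup_singleton]
      have h1 : (Finset.univ.image P).sup id = U := by
        rw [hU, Finset.sup_image]; rfl
      rw [h1]
      simp only [id]
      rw [hR, Finset.sup_eq_union]
      exact Finset.union_sdiff_of_subset hUE
    · calc m = (Finset.univ.image P).card := by
            rw [Finset.card_image_of_injective _ hinj, Finset.card_univ, Fintype.card_fin]
        _ ≤ _ := by
            apply Finset.card_le_card
            intro C hC
            obtain ⟨i, _, rfl⟩ := Finset.mem_image.mp hC
            rw [Finset.mem_filter]
            exact ⟨Finset.mem_union_left _ hC, (hP i).2⟩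
end
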